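/- Let R be a commutative ring, A a finite projective R-algebra, P a finitely generated projective right A-module, and U, V direct summands of P (as A-modules). If P(m) = U(m) ⊕ V(m) for every maximal ideal m of R (where M(m) = M ⊗_R R/m), then P = U ⊕ V, i.e. the map (u,v) ↦ u+v : U × V → P is an isomorphism. -/

import Mathlib

open TensorProduct

/-- Nakayama-type lemma: a finitely generated module that vanishes after base change to
every residue field (at maximal ideals) is trivial. -/
theorem aux_subsingleton_of_tensor_residue {R M : Type*} [CommRing R] [AddCommGroup M]
    [Module R M] [Module.Finite R M]
    (h : ∀ m : Ideal R, m.IsMaximal → Subsingleton ((R ⧸ m) ⊗[R] M)) :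
    Subsingleton M := by
  have hann : Module.annihilator R M = ⊤ := by
    by_contra hne
    obtain ⟨m, hm, hle⟩ := (Module.annihilator R M).exists_le_maximal hne
    have hsub : Subsingleton (M ⧸ (m • (⊤ : Submodule R M))) := by
      haveI := h m hm
      exact (quotTensorEquivQuotSMul M m).symm.injective.subsingleton
    have htop : (m • (⊤ : Submodule R M)) = ⊤ :=
      Submodule.Quotient.subsingleton_iff.mp hsub
    obtain ⟨r, hr1, hr0⟩ :=
      Submodule.exists_sub_one_mem_and_smul_eq_zero_of_fg_of_le_smul m
        (⊤ : Submodule R M) Module.Finite.fg_top (by rw [htop])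
    have hrann : r ∈ Module.annihilator R M :=
      Module.mem_annihilator.mpr fun x => hr0 x trivial
    have : (1 : R) ∈ m := by
      have := m.sub_mem (hle hrann) hr1
      simpa using this
    exact hm.ne_top (m.eq_top_of_isUnit_mem this isUnit_one)
  refine subsingleton_iff_forall_eq 0 |>.mpr fun x => ?_
  have : (1 : R) ∈ Module.annihilator R M := hann ▸ trivial
  simpa using Module.mem_annihilator.mp this x

set_option synthInstance.maxHeartbeats 1000000 in
/-- Let `R` be a commutative ring, `A` a finite projective `R`-algebra, `P` a finitely
generated projective right `A`-module and `U`, `V` direct summands of `P`.  If for every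
maximal ideal `m` of `R` the map `(u,v) ↦ u + v : U × V → P` becomes an isomorphism after
base change along `R → R ⧸ m`, then it is an isomorphism, i.e. `P = U ⊕ V`. -/
theorem stmt_1 {R A P : Type*} [CommRing R] [Ring A] [Algebra R A]
    [Module.Finite R A] [Module.Projective R A]
    [AddCommGroup P] [Module Aᵐᵒᵖ P] [Module R P] [IsScalarTower R Aᵐᵒᵖ P]
    [Module.Finite Aᵐᵒᵖ P] [Module.Projective Aᵐᵒᵖ P]
    (U V : Submodule Aᵐᵒᵖ P)
    (hU : ∃ U', IsCompl U U') (hV : ∃ V', IsCompl V V')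
    (h : ∀ m : Ideal R, m.IsMaximal →
      Function.Bijective
        (LinearMap.baseChange (R ⧸ m)
          ((LinearMap.coprod U.subtype V.subtype).restrictScalars R))) :
    Function.Bijective (LinearMap.coprod U.subtype V.subtype) := by
  classical
  obtain ⟨U', hU'⟩ := hU
  obtain ⟨V', hV'⟩ := hV
  set F : U × V →ₗ[Aᵐᵒᵖ] P := LinearMap.coprod U.subtype V.subtype with hF
  set f : U × V →ₗ[R] P := F.restrictScalars R with hfdef
  -- Finiteness instances over `R`
  have instAop : Module.Finite R Aᵐᵒᵖ := Module.Finite.equiv (MulOpposite.opLinearEquiv R)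
  have instP : Module.Finite R P := Module.Finite.trans Aᵐᵒᵖ P
  have instU : Module.Finite R U := by
    refine Module.Finite.of_surjective
      ((U.projectionOnto U' hU').restrictScalars R) (fun u => ⟨(u : P), ?_⟩)
    simp [Submodule.projectionOnto_apply_left]
  have instV : Module.Finite R V := by
    refine Module.Finite.of_surjective
      ((V.projectionOnto V' hV').restrictScalars R) (fun v => ⟨(v : P), ?_⟩)
    simp [Submodule.projectionOnto_apply_left]
  -- Surjectivity
  have hsurj : Function.Surjective f := by
    rw [← LinearMap.range_eq_top, ← Submodule.Quotient.subsingleton_iff]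
    refine aux_subsingleton_of_tensor_residue (R := R) (fun m hm => ?_)
    have hq0 : ((LinearMap.range f).mkQ ∘ₗ f) = 0 := by
      ext x <;> simp [Submodule.Quotient.mk_eq_zero]
    have hmkQeq := LinearMap.baseChange_comp (A := R ⧸ m) f (LinearMap.range f).mkQ
    have hmkQsurj : Function.Surjective
        (((LinearMap.range f).mkQ).baseChange (R ⧸ m)) := by
      rw [LinearMap.baseChange_eq_ltensor]
      exact LinearMap.lTensor_surjective _ (Submodule.mkQ_surjective _)
    refine subsingleton_iff_forall_eq 0 |>.mpr fun y => ?_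
    obtain ⟨z, rfl⟩ := hmkQsurj y
    obtain ⟨w, rfl⟩ := (h m hm).surjective z
    rw [← LinearMap.comp_apply, ← LinearMap.baseChange_comp, hq0]
    simp
  have hFsurj : Function.Surjective F := hsurj
  -- Split the surjection over `Aᵐᵒᵖ` using projectivity of `P`
  obtain ⟨s, hs⟩ := Module.projective_lifting_property F LinearMap.id hFsurj
  -- `π` is a projection of `U × V` onto `ker f`
  set π : U × V →ₗ[R] U × V := LinearMap.id - (s.restrictScalars R) ∘ₗ f with hπ
  have hπmem : ∀ x, π x ∈ LinearMap.ker f := by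
    intro x
    have : f (s (f x)) = f x := by
      have := congrArg (fun g => g (f x)) hs
      simpa [hfdef] using this
    simp [hπ, LinearMap.mem_ker, this]
  have hπker : ∀ x ∈ LinearMap.ker f, π x = x := by
    intro x hx
    rw [LinearMap.mem_ker] at hx
    simp [hπ, hx]
  set c : U × V →ₗ[R] LinearMap.ker f := π.codRestrict _ hπmem with hc
  have hcsurj : Function.Surjective c := by
    intro y
    exact ⟨(y : U × V), Subtype.ext (hπker _ y.2)⟩
  have instK : Module.Finite R (LinearMap.ker f) := Module.Finite.of_surjective c hcsurj
  -- Injectivity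
  have hinj : Function.Injective f := by
    rw [← LinearMap.ker_eq_bot, ← Submodule.subsingleton_iff_eq_bot]
    refine aux_subsingleton_of_tensor_residue (R := R) (fun m hm => ?_)
    have hci : c ∘ₗ (LinearMap.ker f).subtype = LinearMap.id :=
      LinearMap.ext fun x => Subtype.ext (hπker _ x.2)
    have hfi : f ∘ₗ (LinearMap.ker f).subtype = 0 := by
      ext x; exact x.2
    refine subsingleton_iff_forall_eq 0 |>.mpr fun y => ?_
    have h1 : (f.baseChange (R ⧸ m)) (((LinearMap.ker f).subtype.baseChange (R ⧸ m)) y) = 0 := by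
      rw [← LinearMap.comp_apply, ← LinearMap.baseChange_comp, hfi]
      simp
    have h2 : ((LinearMap.ker f).subtype.baseChange (R ⧸ m)) y = 0 :=
      (h m hm).injective (by simpa using h1)
    have := congrArg (c.baseChange (R ⧸ m)) h2
    rwa [← LinearMap.comp_apply, ← LinearMap.baseChange_comp, hci,
      LinearMap.baseChange_id, LinearMap.id_apply, map_zero] at this
  exact ⟨hinj, hsurj⟩
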